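/- arXiv:1801.00238 — 8 statements merged into one kernel-verified Lean document; each statement's English description precedes it below -/
import Mathlib

section
/- If κ is an infinite cardinal with κ ≤ 2^κ and c : κ × ω → 2 witnesses the negative polarized partition relation (κ,ω) ↛ ((κ,ω))^{1,1}_2 (i.e. there is no A ⊆ κ of cardinality κ and infinite B ⊆ ω with c constant on A × B), and λ is a cardinal with λ > cf(λ) = κ, then (λ,ω) ↛ ((λ,ω))^{1,1}_2: there is a coloring d : λ × ω → 2 such that there is no A ⊆ λ of cardinality λ and infinite B ⊆ ω with d constant on A × B. -/
open Cardinal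

/-- If `κ` is an infinite cardinal with `κ ≤ 2^κ`, `c : κ × ω → 2` witnesses
`(κ,ω) ↛ ((κ,ω))^{1,1}_2`, and `λ > cf(λ) = κ`, then `(λ,ω) ↛ ((λ,ω))^{1,1}_2`. -/
theorem stmt_0 (κ l : Cardinal) (hκ : ℵ₀ ≤ κ) (hκ2 : κ ≤ 2 ^ κ)
    (c : κ.ord.ToType → ℕ → Bool)
    (hc : ¬ ∃ (A : Set κ.ord.ToType) (B : Set ℕ) (i : Bool),
        #A = κ ∧ B.Infinite ∧ ∀ a ∈ A, ∀ b ∈ B, c a b = i)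
    (hcf : l.ord.cof = κ) (hl : κ < l) :
    ∃ d : l.ord.ToType → ℕ → Bool,
      ¬ ∃ (A : Set l.ord.ToType) (B : Set ℕ) (i : Bool),
        #A = l ∧ B.Infinite ∧ ∀ a ∈ A, ∀ b ∈ B, d a b = i := by
  have hl0 : ℵ₀ ≤ l := hκ.trans hl.le
  -- cofinal subset S of l.ord.ToType with #S = κ
  obtain ⟨S, hSub, hS⟩ := Order.exists_cof_eq l.ord.ToType
  rw [Ordinal.cof_toType, hcf] at hS
  -- equiv S ≃ κ.ord.ToType
  obtain ⟨e⟩ := Cardinal.eq.1 (hS.trans (Cardinal.mk_ord_toType κ).symm)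
  have hub : ∀ a : l.ord.ToType, ∃ s : S, a ≤ (s : l.ord.ToType) := by
    intro a
    obtain ⟨b, hb, hb2⟩ := hSub a
    exact ⟨⟨b, hb⟩, hb2⟩
  choose g hg using hub
  set h : l.ord.ToType → κ.ord.ToType := fun a => e (g a) with hh
  refine ⟨fun a n => c (h a) n, ?_⟩
  rintro ⟨A, B, i, hA, hB, hAB⟩
  apply hc
  refine ⟨h '' A, B, i, ?_, hB, ?_⟩
  · -- #(h '' A) = κ
    refine le_antisymm ((Cardinal.mk_set_le _).trans_eq (Cardinal.mk_ord_toType κ)) ?_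
    by_contra hlt
    push_neg at hlt
    -- A is covered by the fibers of h over h '' A
    have hcov : A ⊆ ⋃ ε : (h '' A), {a : l.ord.ToType | h a = (ε : κ.ord.ToType)} := by
      intro a ha
      exact Set.mem_iUnion.2 ⟨⟨h a, Set.mem_image_of_mem h ha⟩, rfl⟩
    have hfib : ∀ ε : (h '' A),
        #({a : l.ord.ToType | h a = (ε : κ.ord.ToType)}) < l := by
      intro ε
      have hsub : {a : l.ord.ToType | h a = (ε : κ.ord.ToType)} ⊆
          Set.Iic ((e.symm (ε : κ.ord.ToType) : S) : l.ord.ToType) := by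
        intro a ha
        have : g a = e.symm (ε : κ.ord.ToType) := by
          have := congrArg e.symm ha
          simpa [hh] using this
        calc a ≤ (g a : l.ord.ToType) := hg a
          _ = _ := by rw [this]
      refine (Cardinal.mk_le_mk_of_subset hsub).trans_lt ?_
      set x : l.ord.ToType := ((e.symm (ε : κ.ord.ToType) : S) : l.ord.ToType)
      have hIic : Set.Iic x = insert x (Set.Iio x) := by
        ext y; simp [le_iff_lt_or_eq, or_comm]
      rw [hIic]
      refine (Cardinal.mk_insert_le).trans_lt ?_
      exact Cardinal.add_lt_of_lt hl0 (Cardinal.mk_Iio_ord_toType x) (one_lt_aleph0.trans_le hl0)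
    have hι : #(h '' A) < l.ord.cof := by rwa [hcf]
    have hsup : (⨆ ε : (h '' A), #({a : l.ord.ToType | h a = (ε : κ.ord.ToType)})) < l :=
      Ordinal.iSup_lt hι hfib
    have : #A < l := by
      refine ((Cardinal.mk_le_mk_of_subset hcov).trans (Cardinal.mk_iUnion_le _)).trans_lt ?_
      exact Cardinal.mul_lt_of_lt hl0 (hlt.trans hl) hsup
    exact this.ne hA
  · rintro a ⟨b, hb, rfl⟩ n hn
    exact hAB b hb n hn
end

section
/- If the cofinality of the meagre ideal on 2^ω equals ℵ₁ (i.e., there is a family of ℵ₁ many meagre sets cofinal under inclusion among all meagre subsets of 2^ω), then there exists a Luzin set: an uncountable set L ⊆ 2^ω such that every uncountable subset of L is nonmeagre. -/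
open Cardinal Set

lemma notOpen_singleton (x : ℕ → Bool) : ¬ IsOpen ({x} : Set (ℕ → Bool)) := by
  intro h
  have htend : Filter.Tendsto (fun n => Function.update x n (!x n)) Filter.atTop (nhds x) := by
    rw [tendsto_pi_nhds]
    intro i
    apply Filter.Tendsto.congr' (f₁ := fun _ => x i)
    · filter_upwards [Filter.eventually_gt_atTop i] with n hn
      rw [Function.update_of_ne (by omega)]
    · exact tendsto_const_nhds
  obtain ⟨n, hn⟩ := (htend.eventually (h.mem_nhds rfl)).exists
  have : Function.update x n (!x n) n = x n := by rw [hn]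
  simp at this

lemma nwd_singleton (x : ℕ → Bool) : IsNowhereDense ({x} : Set (ℕ → Bool)) := by
  rw [isClosed_singleton.isNowhereDense_iff]
  by_contra h
  have hsub : interior ({x} : Set (ℕ → Bool)) = {x} := by
    apply subset_antisymm interior_subset
    obtain ⟨y, hy⟩ := Set.nonempty_iff_ne_empty.2 h
    have hyx := interior_subset hy
    simp only [mem_singleton_iff] at hyx
    subst hyx
    intro z hz; simp only [mem_singleton_iff] at hz; subst hz; exact hy
  exact notOpen_singleton x (hsub ▸ isOpen_interior)

lemma countable_isMeagre {s : Set (ℕ → Bool)} (hs : s.Countable) : IsMeagre s := by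
  rw [isMeagre_iff_countable_union_isNowhereDense]
  refine ⟨(fun x => ({x} : Set (ℕ → Bool))) '' s, ?_, hs.image _, ?_⟩
  · rintro t ⟨x, -, rfl⟩; exact nwd_singleton x
  · intro x hx; exact ⟨{x}, ⟨x, hx, rfl⟩, rfl⟩

lemma isMeagre_iUnion' {X ι : Type*} [TopologicalSpace X] [Countable ι] {s : ι → Set X}
    (hs : ∀ i, IsMeagre (s i)) : IsMeagre (⋃ i, s i) := by
  rw [IsMeagre, compl_iUnion]
  exact (countable_iInter_mem).mpr hs

lemma IsMeagre.union' {X : Type*} [TopologicalSpace X] {s t : Set X}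
    (hs : IsMeagre s) (ht : IsMeagre t) : IsMeagre (s ∪ t) := by
  rw [IsMeagre, compl_union]
  exact Filter.inter_mem hs ht

lemma countable_Iio (i : (Cardinal.aleph 1).ord.ToType) : (Set.Iio i).Countable :=
  (countable_iff_lt_aleph_one _).2 (mk_Iio_ord_toType i)

lemma exists_luzin_seq (F : (Cardinal.aleph 1).ord.ToType → Set (ℕ → Bool))
    (hF : ∀ i, IsMeagre (F i)) :
    ∃ x : (Cardinal.aleph 1).ord.ToType → (ℕ → Bool),
      ∀ i j, j < i → x i ∉ F j ∧ x i ≠ x j := by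
  have wf : WellFounded ((· < ·) : (Cardinal.aleph 1).ord.ToType → (Cardinal.aleph 1).ord.ToType → Prop) := wellFounded_lt
  let bad : ∀ i : (Cardinal.aleph 1).ord.ToType, (∀ j, j < i → (ℕ → Bool)) → Set (ℕ → Bool) := fun i rec =>
    (⋃ j : Set.Iio i, F j) ∪ (Set.range fun j : Set.Iio i => rec j j.2)
  have hne : ∀ (i : (Cardinal.aleph 1).ord.ToType) (rec : ∀ j, j < i → (ℕ → Bool)), (bad i rec)ᶜ.Nonempty := by
    intro i rec
    have : Countable (Set.Iio i) := (countable_Iio i).to_subtype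
    have hm : IsMeagre (bad i rec) :=
      (isMeagre_iUnion' fun j : Set.Iio i => hF j).union'
        (countable_isMeagre (countable_range _))
    exact (dense_of_mem_residual hm).nonempty
  let x : (Cardinal.aleph 1).ord.ToType → (ℕ → Bool) := wf.fix fun i rec => (hne i rec).choose
  have hx : ∀ i : (Cardinal.aleph 1).ord.ToType, x i = (hne i fun j _ => x j).choose := fun i => wf.fix_eq _ i
  refine ⟨x, fun i j hj => ?_⟩
  have hspec : x i ∈ (bad i fun j _ => x j)ᶜ := hx i ▸ (hne i fun j _ => x j).choose_spec
  simp only [bad, compl_union, mem_inter_iff, compl_iUnion, mem_iInter, mem_compl_iff,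
    mem_range, not_exists] at hspec
  exact ⟨hspec.1 ⟨j, hj⟩, fun h => hspec.2 ⟨j, hj⟩ h.symm⟩

/-- If there is a family of `ℵ₁` many meagre subsets of `2^ω` cofinal (under `⊆`)
among all meagre sets, then there exists a Luzin set: an uncountable set all of
whose uncountable subsets are nonmeagre. -/
theorem stmt_3 (F : (Cardinal.aleph 1).ord.ToType → Set (ℕ → Bool))
    (hF : ∀ i, IsMeagre (F i))
    (hcof : ∀ A : Set (ℕ → Bool), IsMeagre A → ∃ i, A ⊆ F i) :
    ∃ L : Set (ℕ → Bool), ¬ L.Countable ∧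
      ∀ S ⊆ L, ¬ S.Countable → ¬ IsMeagre S := by
  obtain ⟨x, hx⟩ := exists_luzin_seq F hF
  have hinj : Function.Injective x := by
    intro a b hab
    rcases lt_trichotomy a b with h | h | h
    · exact absurd hab.symm (hx b a h).2
    · exact h
    · exact absurd hab (hx a b h).2
  refine ⟨Set.range x, ?_, fun S hSL hSc hSm => ?_⟩
  · intro hc
    have hcnt : Countable ((Cardinal.aleph 1).ord.ToType) := by
      have := hc.to_subtype
      exact Function.Injective.countable
        (f := Set.rangeFactorization x) (fun a b h => hinj (congrArg Subtype.val h))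
    have h1 : #((Cardinal.aleph 1).ord.ToType) ≤ ℵ₀ := Cardinal.mk_le_aleph0_iff.mpr hcnt
    rw [Cardinal.mk_toType, Cardinal.card_ord] at h1
    exact absurd (h1.trans_lt Cardinal.aleph0_lt_aleph_one) (lt_irrefl _)
  · obtain ⟨i, hi⟩ := hcof S hSm
    apply hSc
    have hsub : S ⊆ x '' Set.Iic i := by
      intro s hs
      obtain ⟨j, rfl⟩ := hSL hs
      refine ⟨j, ?_, rfl⟩
      by_contra hji
      exact (hx j i (lt_of_not_ge hji)).1 (hi hs)
    refine (Set.Countable.image ?_ x).mono hsub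
    rw [← Set.Iio_insert]
    exact (countable_Iio i).insert i
end

section
/- If there exists a Luzin set in 2^ω, then there is a coloring c : [ω₁]² → ω such that (1) every uncountable A ⊆ ω₁ realizes all colors (witnessing ω₁ ↛ [ω₁]²_ω), and (2) there is no triangle with three distinct colors, i.e., for all distinct α, β, γ < ω₁, the set {c(α,β), c(β,γ), c(γ,α)} has at most 2 elements. -/
open Cardinal

/-- First difference of two sequences. -/
noncomputable def ddiff (x y : ℕ → Bool) : ℕ := sInf {n | x n ≠ y n}

lemma ddiff_spec {x y : ℕ → Bool} (h : x ≠ y) : x (ddiff x y) ≠ y (ddiff x y) :=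
  Nat.sInf_mem (Function.ne_iff.mp h)

lemma ddiff_agree {x y : ℕ → Bool} {m : ℕ} (h : m < ddiff x y) : x m = y m := by
  by_contra hm
  exact absurd (Nat.sInf_le (s := {n | x n ≠ y n}) hm) (not_le.mpr h)

lemma ddiff_eq {x y : ℕ → Bool} {n : ℕ} (hn : x n ≠ y n) (hlt : ∀ m < n, x m = y m) :
    ddiff x y = n := by
  refine le_antisymm (Nat.sInf_le hn) ?_
  by_contra h
  push_neg at h
  exact ddiff_spec (Function.ne_iff.mpr ⟨n, hn⟩) (hlt _ h)

lemma ddiff_symm (x y : ℕ → Bool) : ddiff x y = ddiff y x := by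
  unfold ddiff
  congr 1
  ext n
  exact ne_comm

/-- Among the three pairwise first-differences, two coincide. -/
lemma ddiff_tri {x y z : ℕ → Bool} (hxy : x ≠ y) (hyz : y ≠ z) (hxz : x ≠ z) :
    ddiff x y = ddiff y z ∨ ddiff x z = ddiff x y ∨ ddiff x z = ddiff y z := by
  rcases lt_trichotomy (ddiff x y) (ddiff y z) with h | h | h
  · right; left
    refine ddiff_eq ?_ ?_
    · have h1 : x (ddiff x y) ≠ y (ddiff x y) := ddiff_spec hxy
      have h2 : y (ddiff x y) = z (ddiff x y) := ddiff_agree h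
      rw [← h2]; exact h1
    · intro m hm
      rw [ddiff_agree hm, ddiff_agree (hm.trans h)]
  · left; exact h
  · right; right
    refine ddiff_eq ?_ ?_
    · have h1 : y (ddiff y z) ≠ z (ddiff y z) := ddiff_spec hyz
      have h2 : x (ddiff y z) = y (ddiff y z) := ddiff_agree h
      rw [h2]; exact h1
    · intro m hm
      rw [ddiff_agree (hm.trans h), ddiff_agree hm]

lemma cone_isOpen (x : ℕ → Bool) (n : ℕ) : IsOpen {z : ℕ → Bool | ∀ m < n, z m = x m} := by
  have : {z : ℕ → Bool | ∀ m < n, z m = x m}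
      = (↑(Finset.range n) : Set ℕ).pi (fun m => {x m}) := by
    ext z
    simp only [Set.mem_setOf_eq, Set.mem_pi, Finset.coe_range, Set.mem_Iio, Set.mem_singleton_iff]
  rw [this]
  exact isOpen_set_pi (Finset.range n).finite_toSet (fun a _ => isOpen_discrete _)

/-- The key meagreness lemma: if `S` never splits at any level in an unbounded set `K`,
then `S` is meagre. -/
lemma key_meagre (S : Set (ℕ → Bool)) (K : Set ℕ) (hK : ∀ N, ∃ n ∈ K, N ≤ n)
    (hS : ∀ x ∈ S, ∀ y ∈ S, ∀ n ∈ K, (∀ m < n, x m = y m) → x n = y n) :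
    IsMeagre S := by
  set B : Set (ℕ → Bool) :=
    ⋂ n ∈ K, ⋂ x ∈ S, {z : ℕ → Bool | (∀ m < n, z m = x m) → z n = x n} with hB
  set C := B ∩ closure S with hC
  have hSC : S ⊆ C := by
    intro x hx
    refine ⟨?_, subset_closure hx⟩
    simp only [hB, Set.mem_iInter, Set.mem_setOf_eq]
    intro n hn y hy h
    exact hS x hx y hy n hn h
  have hCclosed : IsClosed C := by
    refine IsClosed.inter ?_ isClosed_closure
    refine isClosed_biInter fun n hn => isClosed_biInter fun x hx => ?_
    have : {z : ℕ → Bool | (∀ m < n, z m = x m) → z n = x n}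
        = {z : ℕ → Bool | ∀ m < n, z m = x m}ᶜ ∪ ((fun z : ℕ → Bool => z n) ⁻¹' {x n}) := by
      ext z
      simp [imp_iff_not_or]
    rw [this]
    exact IsClosed.union (cone_isOpen x n).isClosed_compl
      (IsClosed.preimage (continuous_apply n) isClosed_singleton)
  have hCint : interior C = ∅ := by
    by_contra hne
    obtain ⟨x, hx⟩ := Set.nonempty_iff_ne_empty.mpr hne
    obtain ⟨I, u, hIu, hsub⟩ := (isOpen_pi_iff.mp isOpen_interior) x hx
    set N := I.sup id + 1 with hN
    obtain ⟨n, hnK, hnN⟩ := hK N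
    -- x ∈ C, so x ∈ closure S; the cone of x of length n meets S
    have hxC : x ∈ C := interior_subset hx
    obtain ⟨s, hsS, hsx⟩ : ∃ s ∈ S, ∀ m < n, s m = x m := by
      have hopen : IsOpen {z : ℕ → Bool | ∀ m < n, z m = x m} := cone_isOpen x n
      have hmem : x ∈ {z : ℕ → Bool | ∀ m < n, z m = x m} := fun m _ => rfl
      obtain ⟨s, hs1, hs2⟩ := (mem_closure_iff.mp hxC.2) _ hopen hmem
      exact ⟨s, hs2, hs1⟩
    -- flip s at coordinate n
    set z : ℕ → Bool := fun i => if i = n then ! (s n) else s i with hz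
    have hzcone : ∀ m < n, z m = x m := by
      intro m hm
      simp only [hz, if_neg hm.ne]
      exact hsx m hm
    have hzC : z ∈ C := by
      apply interior_subset
      apply hsub
      intro i hiI
      have hiltN : i < N := Nat.lt_succ_of_le (Finset.le_sup (f := id) hiI)
      have : z i = x i := hzcone i (lt_of_lt_of_le hiltN hnN)
      rw [this]
      exact ((hIu i hiI).2 : x i ∈ u i)
    have hzB : z ∈ B := hzC.1
    simp only [hB, Set.mem_iInter, Set.mem_setOf_eq] at hzB
    have := hzB n hnK s hsS (by
      intro m hm
      simp only [hz, if_neg hm.ne]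
      )
    simp only [hz, if_pos rfl] at this
    exact (Bool.not_ne_self (s n)) this
  have hCmeagre : IsMeagre C := by
    rw [isMeagre_iff_countable_union_isNowhereDense]
    refine ⟨{C}, ?_, Set.countable_singleton _, by simp⟩
    intro t ht
    rw [Set.mem_singleton_iff] at ht
    subst ht
    rw [hCclosed.isNowhereDense_iff]
    exact hCint
  exact hCmeagre.mono hSC

lemma card_le_two {u v w : ℕ} (h : u = v ∨ w = u ∨ w = v) :
    ({u, v, w} : Finset ℕ).card ≤ 2 := by
  have pair2 : ∀ a b : ℕ, ({a, b} : Finset ℕ).card ≤ 2 :=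
    fun a b => le_trans (Finset.card_insert_le _ _) (by simp)
  have pair3' : ∀ a b c : ℕ, ({a, b, c} : Finset ℕ) ⊆ {a, b} → ({a, b, c} : Finset ℕ).card ≤ 2 :=
    fun a b c hs => le_trans (Finset.card_le_card hs) (pair2 a b)
  have pair3 : ∀ a b c : ℕ, ({a, b, c} : Finset ℕ) ⊆ {b, c} → ({a, b, c} : Finset ℕ).card ≤ 2 :=
    fun a b c hs => le_trans (Finset.card_le_card hs) (pair2 b c)
  rcases h with h | h | h <;> subst h
  · refine pair3 _ _ _ ?_
    intro a ha
    simp only [Finset.mem_insert, Finset.mem_singleton] at ha ⊢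
    tauto
  · refine pair3 _ _ _ ?_
    intro a ha
    simp only [Finset.mem_insert, Finset.mem_singleton] at ha ⊢
    tauto
  · refine pair3' _ _ _ ?_
    intro a ha
    simp only [Finset.mem_insert, Finset.mem_singleton] at ha ⊢
    tauto

/-- If there is a Luzin set in `2^ω`, then there is a colouring `c : [ω₁]² → ω`
witnessing `ω₁ ↛ [ω₁]²_ω` such that no triangle receives three distinct colours. -/
theorem stmt_4
    (hLuzin : ∃ L : Set (ℕ → Bool), ¬ L.Countable ∧
      ∀ S ⊆ L, ¬ S.Countable → ¬ IsMeagre S) :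
    ∃ c : (Cardinal.aleph 1).ord.ToType → (Cardinal.aleph 1).ord.ToType → ℕ,
      (∀ a b, c a b = c b a) ∧
      (∀ A : Set (Cardinal.aleph 1).ord.ToType, ¬ A.Countable →
        ∀ k : ℕ, ∃ a ∈ A, ∃ b ∈ A, a ≠ b ∧ c a b = k) ∧
      (∀ a b d : (Cardinal.aleph 1).ord.ToType, a ≠ b → b ≠ d → a ≠ d →
        ({c a b, c b d, c a d} : Finset ℕ).card ≤ 2) := by
  obtain ⟨L, hLunc, hLuz⟩ := hLuzin
  -- get an injection from ω₁ into L
  have hL0 : Cardinal.aleph0 < Cardinal.mk L := by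
    rw [← not_le, Cardinal.mk_le_aleph0_iff, Set.countable_coe_iff]
    exact hLunc
  have h1 : Cardinal.aleph 1 ≤ Cardinal.lift (Cardinal.mk L) := by
    have ha : Cardinal.aleph 1 = Order.succ (Cardinal.aleph 0) := by
      rw [show (1 : Ordinal) = Order.succ 0 from (Ordinal.succ_zero).symm,
        Cardinal.aleph_succ]
    rw [ha, Order.succ_le_iff, Cardinal.aleph_zero]
    calc Cardinal.aleph0 = Cardinal.lift Cardinal.aleph0 := Cardinal.lift_aleph0.symm
      _ < Cardinal.lift (Cardinal.mk L) := Cardinal.lift_lt.mpr hL0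
  have h2 : Nonempty (((Cardinal.aleph 1).ord.ToType) ↪ L) := by
    rw [← Cardinal.lift_mk_le']
    rw [Cardinal.mk_ord_toType]
    calc Cardinal.lift (Cardinal.aleph 1) = Cardinal.aleph 1 := by
          rw [Cardinal.lift_aleph]; norm_num
      _ ≤ Cardinal.lift (Cardinal.mk L) := h1
  obtain ⟨f⟩ := h2
  set g : (Cardinal.aleph 1).ord.ToType → (ℕ → Bool) := fun a => (f a : ℕ → Bool) with hg
  have hginj : Function.Injective g := fun a b h => f.injective (Subtype.coe_injective h)
  have hgL : ∀ a, g a ∈ L := fun a => (f a).2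
  refine ⟨fun a b => (ddiff (g a) (g b)).unpair.1, ?_, ?_, ?_⟩
  · intro a b
    dsimp only
    rw [ddiff_symm]
  · intro A hA k
    by_contra hcon
    push_neg at hcon
    set S : Set (ℕ → Bool) := g '' A with hSdef
    have hSL : S ⊆ L := by rintro _ ⟨a, _, rfl⟩; exact hgL a
    have hSunc : ¬ S.Countable := by
      intro hc
      exact hA (((hc.preimage hginj).mono (Set.subset_preimage_image g A)))
    refine hLuz S hSL hSunc ?_
    refine key_meagre S {n | n.unpair.1 = k} (fun N => ⟨Nat.pair k N, ?_, Nat.right_le_pair k N⟩) ?_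
    · simp [Nat.unpair_pair]
    · rintro x ⟨a, haA, rfl⟩ y ⟨b, hbA, rfl⟩ n hn hagree
      by_contra hne
      have hxy : g a ≠ g b := fun h => hne (by rw [h])
      have hd : ddiff (g a) (g b) = n := ddiff_eq hne hagree
      have hab : a ≠ b := fun h => hxy (by rw [h])
      exact hcon a haA b hbA hab (by rw [hd]; exact hn)
  · intro a b d hab hbd had
    exact card_le_two (by
      rcases ddiff_tri (hginj.ne hab) (hginj.ne hbd) (hginj.ne had) with h | h | h
      · left; dsimp only; rw [h]
      · right; left; dsimp only; rw [h]
      · right; right; dsimp only; rw [h])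
end

section
/- Suppose 𝔟 = 𝔡, i.e., there exists an unbounded scale ⟨f_α : α < 𝔟⟩ in ω^ω: a sequence well-ordered by eventual domination such that every g ∈ ω^ω is eventually dominated by some f_α. Then there is a coloring χ : 𝔟 × ω → ω such that for every X ⊆ 𝔟 of cardinality 𝔟 and every infinite Y ⊆ ω, χ restricted to X × Y is surjective onto ω. In particular (𝔡, ω) ↛ [(𝔟, ω)]^{1,1}_{ℵ₀}. -/
open Cardinal

/-- The unbounding number `𝔟` of `(ω^ω, ≤*)`. -/
noncomputable def bNum : Cardinal :=
  sInf {c | ∃ A : Set (ℕ → ℕ), #A = c ∧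
    ∀ g : ℕ → ℕ, ∃ f ∈ A, {n : ℕ | g n < f n}.Infinite}

/-- The dominating number `𝔡` of `(ω^ω, ≤*)`. -/
noncomputable def dNum : Cardinal :=
  sInf {c | ∃ A : Set (ℕ → ℕ), #A = c ∧
    ∀ g : ℕ → ℕ, ∃ f ∈ A, {n : ℕ | f n < g n}.Finite}

namespace Stmt5Aux

/-! ### Basic facts about `bNum` and `dNum` -/

lemma bSet_nonempty :
    {c | ∃ A : Set (ℕ → ℕ), #A = c ∧
      ∀ g : ℕ → ℕ, ∃ f ∈ A, {n : ℕ | g n < f n}.Infinite}.Nonempty := by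
  refine ⟨#(Set.univ : Set (ℕ → ℕ)), Set.univ, rfl, fun g => ⟨fun n => g n + 1, trivial, ?_⟩⟩
  have : {n : ℕ | g n < g n + 1} = Set.univ := by ext n; simp
  rw [this]; exact Set.infinite_univ

lemma aleph0_le_bNum : ℵ₀ ≤ bNum := by
  refine le_csInf bSet_nonempty ?_
  rintro c ⟨A, hA, hub⟩
  by_contra hlt
  rw [not_le] at hlt
  have hAfin : A.Finite := by
    rw [← Cardinal.lt_aleph0_iff_set_finite, hA]; exact hlt
  obtain ⟨f, hfA, hinf⟩ := hub (fun n => hAfin.toFinset.sup (fun f => f n))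
  apply hinf
  have : {n : ℕ | hAfin.toFinset.sup (fun f => f n) < f n} = ∅ := by
    ext n
    simp only [Set.mem_setOf_eq, Set.mem_empty_iff_false, iff_false, not_lt]
    exact Finset.le_sup (f := fun f => f n) (hAfin.mem_toFinset.mpr hfA)
  rw [this]; exact Set.finite_empty

/-- Any family of size `< bNum` is bounded. -/
lemma bounded_of_lt {A : Set (ℕ → ℕ)} (hA : #A < bNum) :
    ∃ g : ℕ → ℕ, ∀ f ∈ A, {n : ℕ | g n < f n}.Finite := by
  by_contra hc
  push_neg at hc
  have : bNum ≤ #A := by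
    refine csInf_le (OrderBot.bddBelow _) ⟨A, rfl, fun g => ?_⟩
    obtain ⟨f, hfA, hf⟩ := hc g
    exact ⟨f, hfA, hf⟩
  exact absurd (this.trans_lt hA) (lt_irrefl _)

lemma bnd_ex (A : Set (ℕ → ℕ)) :
    ∃ g : ℕ → ℕ, #A < bNum → ∀ f ∈ A, {n : ℕ | g n < f n}.Finite := by
  by_cases h : #A < bNum
  · obtain ⟨g, hg⟩ := bounded_of_lt h
    exact ⟨g, fun _ => hg⟩
  · exact ⟨fun _ => 0, fun hc => absurd hc h⟩

/-- A choice of a bound for a family of functions. -/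
noncomputable def bnd (A : Set (ℕ → ℕ)) : ℕ → ℕ := (bnd_ex A).choose

lemma bnd_spec {A : Set (ℕ → ℕ)} (hA : #A < bNum) :
    ∀ f ∈ A, {n : ℕ | bnd A n < f n}.Finite :=
  (bnd_ex A).choose_spec hA

/-! ### The scale -/

/-- A `<*`-increasing scale above the family `e`, built by transfinite recursion. -/
noncomputable def scl (e : bNum.ord.ToType → ℕ → ℕ) : bNum.ord.ToType → ℕ → ℕ :=
  (IsWellFounded.wf (α := bNum.ord.ToType) (r := (· < ·))).fix
    (fun α IH n =>
      bnd (Set.range (fun β : Set.Iio α => IH β.1 β.2) ∪ {e α}) n + 1)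

lemma scl_eq (e : bNum.ord.ToType → ℕ → ℕ) (α : bNum.ord.ToType) :
    scl e α = fun n =>
      bnd (Set.range (fun β : Set.Iio α => scl e β.1) ∪ {e α}) n + 1 :=
  WellFounded.fix_eq _ _ α

lemma scl_card (e : bNum.ord.ToType → ℕ → ℕ) (α : bNum.ord.ToType) :
    #(Set.range (fun β : Set.Iio α => scl e β.1) ∪ {e α} : Set (ℕ → ℕ)) < bNum := by
  refine lt_of_le_of_lt (Cardinal.mk_union_le _ _) (Cardinal.add_lt_of_lt aleph0_le_bNum ?_ ?_)
  · exact lt_of_le_of_lt Cardinal.mk_range_le (Cardinal.mk_Iio_ord_toType α)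
  · rw [Cardinal.mk_singleton]
    exact Cardinal.one_lt_aleph0.trans_le aleph0_le_bNum

lemma scl_prop1 (e : bNum.ord.ToType → ℕ → ℕ) {β α : bNum.ord.ToType} (hβ : β < α) :
    {n : ℕ | scl e α n ≤ scl e β n}.Finite := by
  have hs := bnd_spec (scl_card e α) (scl e β) (Set.mem_union_left _ ⟨⟨β, hβ⟩, rfl⟩)
  refine hs.subset ?_
  intro n hn
  simp only [Set.mem_setOf_eq] at hn ⊢
  have h1 := congrFun (scl_eq e α) n
  omega

lemma scl_prop2 (e : bNum.ord.ToType → ℕ → ℕ) (α : bNum.ord.ToType) :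
    {n : ℕ | scl e α n ≤ e α n}.Finite := by
  have hs := bnd_spec (scl_card e α) (e α) (Set.mem_union_right _ rfl)
  refine hs.subset ?_
  intro n hn
  simp only [Set.mem_setOf_eq] at hn ⊢
  have h1 := congrFun (scl_eq e α) n
  omega

/-- From `𝔟 = 𝔡` we get a scale: a `<*`-increasing family indexed by `bNum.ord.ToType`
which is dominating. -/
lemma exists_scale (h : bNum = dNum) :
    ∃ F : bNum.ord.ToType → ℕ → ℕ,
      (∀ β α : bNum.ord.ToType, β < α → {n : ℕ | F α n ≤ F β n}.Finite) ∧
      (∀ g : ℕ → ℕ, ∃ γ : bNum.ord.ToType, {n : ℕ | F γ n ≤ g n}.Finite) := by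
  have hd : dNum ∈ {c | ∃ A : Set (ℕ → ℕ), #A = c ∧
      ∀ g : ℕ → ℕ, ∃ f ∈ A, {n : ℕ | f n < g n}.Finite} := by
    refine csInf_mem ⟨#(Set.univ : Set (ℕ → ℕ)), Set.univ, rfl, fun g => ⟨g, trivial, ?_⟩⟩
    have : {n : ℕ | g n < g n} = ∅ := by ext n; simp
    rw [this]; exact Set.finite_empty
  obtain ⟨A, hAcard, hAdom⟩ := hd
  have hmk : #(bNum.ord.ToType) = #A := by
    rw [Cardinal.mk_ord_toType, h, hAcard]
  obtain ⟨eqv⟩ := Cardinal.eq.mp hmk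
  set e : bNum.ord.ToType → ℕ → ℕ := fun γ => (eqv γ : ℕ → ℕ) with he_def
  refine ⟨scl e, fun β α hβ => scl_prop1 e hβ, fun g => ?_⟩
  obtain ⟨f, hfA, hf⟩ := hAdom g
  refine ⟨eqv.symm ⟨f, hfA⟩, ?_⟩
  have he : e (eqv.symm ⟨f, hfA⟩) = f := by simp [he_def]
  have h2 := scl_prop2 e (eqv.symm ⟨f, hfA⟩)
  rw [he] at h2
  refine (h2.union hf).subset ?_
  intro n hn
  simp only [Set.mem_setOf_eq, Set.mem_union] at hn ⊢
  by_cases hfg : f n < g n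
  · right; exact hfg
  · left; exact hn.trans (not_lt.1 hfg)

/-! ### Blocks -/

/-- Running maximum of `f` on `[0, n]`. -/
def mx (f : ℕ → ℕ) (n : ℕ) : ℕ := (Finset.range (n + 1)).sup f

lemma le_mx (f : ℕ → ℕ) {i n : ℕ} (h : i ≤ n) : f i ≤ mx f n :=
  Finset.le_sup (Finset.mem_range.mpr (by omega))

/-- Block boundaries determined by `f`. -/
def blk (f : ℕ → ℕ) : ℕ → ℕ
  | 0 => 0
  | j + 1 => max (blk f j) (mx f (blk f j)) + 1

lemma blk_lt (f : ℕ → ℕ) (j : ℕ) : blk f j < blk f (j + 1) := by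
  show blk f j < max (blk f j) (mx f (blk f j)) + 1
  omega

lemma mx_lt_blk (f : ℕ → ℕ) (j : ℕ) : mx f (blk f j) < blk f (j + 1) := by
  show mx f (blk f j) < max (blk f j) (mx f (blk f j)) + 1
  omega

lemma le_blk (f : ℕ → ℕ) (j : ℕ) : j ≤ blk f j := by
  induction j with
  | zero => exact Nat.zero_le _
  | succ j ih => have := blk_lt f j; omega

lemma blk_mono (f : ℕ → ℕ) : StrictMono (blk f) :=
  strictMono_nat_of_lt_succ (blk_lt f)

/-- Index of the block containing `n`. -/
def idx (f : ℕ → ℕ) (n : ℕ) : ℕ := Nat.findGreatest (fun j => blk f j ≤ n) n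

lemma idx_eq (f : ℕ → ℕ) {j n : ℕ} (h1 : blk f j ≤ n) (h2 : n < blk f (j + 1)) :
    idx f n = j := by
  have hjn : j ≤ n := (le_blk f j).trans h1
  have hj : j ≤ idx f n :=
    Nat.le_findGreatest (P := fun i => blk f i ≤ n) hjn h1
  have hub : blk f (idx f n) ≤ n :=
    Nat.findGreatest_spec (P := fun i => blk f i ≤ n) (m := j) (n := n) hjn h1
  by_contra hne
  have hlt : j + 1 ≤ idx f n := lt_of_le_of_ne hj (Ne.symm hne)
  have := (blk_mono f).monotone hlt
  omega

end Stmt5Aux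

open Stmt5Aux in
/-- If `𝔟 = 𝔡`, there is a colouring `χ : 𝔟 × ω → ω` which is onto `ω` on every
`X × Y` with `|X| = 𝔟` and `Y` infinite; hence `(𝔡,ω) ↛ [(𝔟,ω)]^{1,1}_{ℵ₀}`. -/
theorem stmt_5 (h : bNum = dNum) :
    ∃ χ : bNum.ord.ToType → ℕ → ℕ,
      ∀ X : Set bNum.ord.ToType, #X = bNum →
        ∀ Y : Set ℕ, Y.Infinite →
          ∀ k : ℕ, ∃ x ∈ X, ∃ y ∈ Y, χ x y = k := by
  classical
  obtain ⟨F, hsc, hdom⟩ := exists_scale h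
  refine ⟨fun α n => (Nat.unpair (idx (F α) n)).1, ?_⟩
  intro X hX Y hY k
  set p : ℕ → Prop := fun n => n ∈ Y with hp_def
  have hp : {n : ℕ | p n}.Infinite := by
    have : {n : ℕ | p n} = Y := by ext n; rfl
    rwa [this]
  obtain ⟨γ, hγ⟩ := hdom (Nat.nth p)
  have hcof : ∃ α ∈ X, γ ≤ α := by
    by_contra hc
    push_neg at hc
    have hsub : X ⊆ Set.Iio γ := fun α hα => hc α hα
    have hle := Cardinal.mk_le_mk_of_subset hsub
    rw [hX] at hle
    exact absurd (hle.trans_lt (Cardinal.mk_Iio_ord_toType γ)) (lt_irrefl _)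
  obtain ⟨α, hαX, hγα⟩ := hcof
  have hdomα : {n : ℕ | F α n ≤ Nat.nth p n}.Finite := by
    rcases eq_or_lt_of_le hγα with rfl | hlt
    · exact hγ
    · refine ((hsc γ α hlt).union hγ).subset ?_
      intro n hn
      simp only [Set.mem_setOf_eq, Set.mem_union] at hn ⊢
      by_cases h2 : F γ n ≤ Nat.nth p n
      · right; exact h2
      · left; exact hn.trans (not_le.1 h2).le
  obtain ⟨B, hB⟩ := hdomα.bddAbove
  have hN : ∀ n, B < n → Nat.nth p n < F α n := by
    intro n hn
    by_contra hcon
    push_neg at hcon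
    have : n ≤ B := hB hcon
    omega
  set j := Nat.pair k (Nat.nth p (B + 1) + 1) with hj_def
  have hjk : (Nat.unpair j).1 = k := by simp [hj_def]
  have hjlarge : Nat.nth p (B + 1) < blk (F α) j := by
    have h1 := Nat.right_le_pair k (Nat.nth p (B + 1) + 1)
    have h2 := le_blk (F α) j
    omega
  by_cases hex : ∃ y, p y ∧ blk (F α) j ≤ y ∧ y < blk (F α) (j + 1)
  · obtain ⟨y, hyp, hy1, hy2⟩ := hex
    refine ⟨α, hαX, y, hyp, ?_⟩
    show (Nat.unpair (idx (F α) y)).1 = k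
    rw [idx_eq (F α) hy1 hy2, hjk]
  · push_neg at hex
    exfalso
    have h1 : blk (F α) j ≤ Nat.nth p (Nat.count p (blk (F α) j)) :=
      Nat.le_nth_count hp _
    have hmem : p (Nat.nth p (Nat.count p (blk (F α) j))) :=
      Nat.nth_mem_of_infinite hp _
    have h2 : blk (F α) (j + 1) ≤ Nat.nth p (Nat.count p (blk (F α) j)) :=
      hex _ hmem h1
    have h3 : B + 1 < Nat.count p (blk (F α) j) := by
      have hcnt : Nat.count p (Nat.nth p (B + 1) + 1) = B + 2 :=
        Nat.count_nth_succ_of_infinite hp _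
      have hmono : Nat.count p (Nat.nth p (B + 1) + 1) ≤ Nat.count p (blk (F α) j) :=
        Nat.count_monotone p hjlarge
      omega
    have h4 : Nat.count p (blk (F α) j) ≤ blk (F α) j := Nat.count_le p
    have h5 : F α (Nat.count p (blk (F α) j)) ≤ mx (F α) (blk (F α) j) := le_mx (F α) h4
    have h6 : Nat.nth p (Nat.count p (blk (F α) j)) < F α (Nat.count p (blk (F α) j)) :=
      hN _ (by omega)
    have h7 : mx (F α) (blk (F α) j) < blk (F α) (j + 1) := mx_lt_blk (F α) j
    omega
end

section
/- Suppose 𝔡 = ℵ₁, witnessed by a scale ⟨f_α : α < ω₁⟩ in ω^ω that is dominating (every g ∈ ω^ω is eventually strictly dominated by some f_α). Then there is a symmetric coloring χ : ω₁ × ω₁ → ω such that for every X ⊆ ω₁ of cardinality ℵ₁ and every countably infinite Y ⊆ ω₁, χ restricted to X × Y is surjective onto ω. That is, (ω₁, ω₁) ↛ [(ω₁, ω) or (ω, ω₁)]^{1,1}_{ℵ₀}. -/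
open Cardinal

namespace Stmt6
noncomputable section

attribute [local instance] Classical.propDecidable

abbrev OM : Type _ := (Cardinal.aleph 1).ord.ToType

lemma wfOM : WellFounded ((· < ·) : OM → OM → Prop) := IsWellFounded.wf

lemma countable_Iio (x : OM) : (Set.Iio x).Countable := by
  rw [Cardinal.countable_iff_lt_aleph_one]
  exact Cardinal.mk_Iio_ord_toType x

lemma countable_Iic (x : OM) : (Set.Iic x).Countable := by
  have : Set.Iic x = insert x (Set.Iio x) := by
    ext y; simp [le_iff_lt_or_eq, or_comm]
  rw [this]
  exact (countable_Iio x).insert x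

/-- surjection from ℕ onto `Iio x` (when nonempty). -/
def psi (x : OM) : ℕ → OM :=
  if h : (Set.Iio x).Nonempty then
    fun n => (((countable_Iio x).exists_eq_range h).choose n)
  else fun _ => x

lemma psi_lt {x : OM} (h : (Set.Iio x).Nonempty) (n : ℕ) : psi x n < x := by
  rw [psi, dif_pos h]
  have hs := ((countable_Iio x).exists_eq_range h).choose_spec
  have hmem : ((countable_Iio x).exists_eq_range h).choose n ∈
      Set.range ((countable_Iio x).exists_eq_range h).choose := Set.mem_range_self n
  rw [← hs] at hmem
  exact hmem

lemma psi_surj {x z : OM} (hz : z < x) : ∃ n, psi x n = z := by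
  have h : (Set.Iio x).Nonempty := ⟨z, hz⟩
  rw [psi]
  simp only [dif_pos h]
  have hs := ((countable_Iio x).exists_eq_range h).choose_spec
  have : z ∈ Set.range ((countable_Iio x).exists_eq_range h).choose := by
    rw [← hs]; exact hz
  exact this

lemma psi_lt' {x y : OM} (h : ∃ n, y < psi x n) (m : ℕ) : psi x m < x := by
  have hne : (Set.Iio x).Nonempty := by
    by_cases hne : (Set.Iio x).Nonempty
    · exact hne
    · obtain ⟨n, hn⟩ := h
      rw [psi, dif_neg hne] at hn
      exact absurd ⟨y, hn⟩ hne
  exact psi_lt hne m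

/-- injection of `Iio x` into ℕ, with countably many "traces". -/
def E : OM → OM → ℕ :=
  wfOM.fix (fun x IH y =>
    if h : ∃ n, y < psi x n then
      Nat.pair (Nat.find h + 1) (IH (psi x (Nat.find h)) (psi_lt' h _) y)
    else 0)

lemma E_def (x y : OM) :
    E x y = if h : ∃ n, y < psi x n then
      Nat.pair (Nat.find h + 1) (E (psi x (Nat.find h)) y)
    else 0 := by
  conv_lhs => rw [E, WellFounded.fix_eq]
  rfl

lemma pair_pos (n v : ℕ) : 0 < Nat.pair (n + 1) v :=
  lt_of_lt_of_le (Nat.succ_pos n) (Nat.left_le_pair _ _)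

lemma E_injOn (x : OM) : Set.InjOn (E x) (Set.Iio x) := by
  induction x using wfOM.induction with
  | _ x IH =>
    intro y hy z hz hEq
    rw [E_def x y, E_def x z] at hEq
    by_cases hY : ∃ n, y < psi x n
    · by_cases hZ : ∃ n, z < psi x n
      · rw [dif_pos hY, dif_pos hZ] at hEq
        obtain ⟨h1, h2⟩ := Nat.pair_eq_pair.mp hEq
        have h1' : Nat.find hY = Nat.find hZ := Nat.succ_injective h1
        have hyz : y ∈ Set.Iio (psi x (Nat.find hY)) := Nat.find_spec hY
        have hzz : z ∈ Set.Iio (psi x (Nat.find hY)) := by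
          rw [h1']; exact Nat.find_spec hZ
        exact IH (psi x (Nat.find hY)) (psi_lt' hY _) hyz hzz (by rw [h2, h1'])
      · rw [dif_pos hY, dif_neg hZ] at hEq
        exact absurd hEq (pair_pos _ _).ne'
    · by_cases hZ : ∃ n, z < psi x n
      · rw [dif_neg hY, dif_pos hZ] at hEq
        exact absurd hEq.symm (pair_pos _ _).ne'
      · -- both maximal
        have h1 : ¬ y < z := fun hlt => hY (by obtain ⟨n, hn⟩ := psi_surj hz; exact ⟨n, hn ▸ hlt⟩)
        have h2 : ¬ z < y := fun hlt => hZ (by obtain ⟨n, hn⟩ := psi_surj hy; exact ⟨n, hn ▸ hlt⟩)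
        exact le_antisymm (not_lt.mp h2) (not_lt.mp h1)

end
end Stmt6

namespace Stmt6
noncomputable section
attribute [local instance] Classical.propDecidable

/-- the `δ`-trace of column `x`. -/
def trace (δ x : OM) : OM → ℕ := fun y => if y < δ then E x y else 0

def combine (δ : OM) (t : List OM) (g : OM → ℕ) : OM → ℕ := fun y =>
  if y < δ then
    if h : ∃ n, n < t.length ∧ y < t.getD n y then
      Nat.pair (Nat.find h + 1) (E (t.getD (Nat.find h) y) y)
    else Nat.pair (t.length + 1) (g y)
  else 0

def FF (δ : OM) (p : ↥(Set.Iic δ) × List (List ↥(Set.Iio δ))) : OM → ℕ :=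
  (p.2.map (fun l => l.map Subtype.val)).foldr (combine δ) (trace δ (p.1 : OM))

lemma trace_mem (δ x : OM) : trace δ x ∈ Set.range (FF δ) := by
  induction x using wfOM.induction with
  | _ x IH =>
    by_cases hx : x ≤ δ
    · exact ⟨(⟨x, hx⟩, []), rfl⟩
    · push_neg at hx
      have hne : (Set.Iio x).Nonempty := ⟨δ, hx⟩
      have hNex : ∃ n, δ ≤ psi x n := by
        obtain ⟨n, hn⟩ := psi_surj hx; exact ⟨n, hn.ge⟩
      set N := Nat.find hNex with hNdef
      have hz1lt : psi x N < x := psi_lt hne N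
      have hz1ge : δ ≤ psi x N := Nat.find_spec hNex
      obtain ⟨⟨b, L⟩, hbL⟩ := IH (psi x N) hz1lt
      have hsm : ∀ n ∈ List.range N, n < N := fun n hn => List.mem_range.mp hn
      set tupS : List ↥(Set.Iio δ) :=
        (List.range N).pmap (fun n hn => ⟨psi x n, not_le.mp (Nat.find_min hNex hn)⟩) hsm
        with htupS
      refine ⟨(b, tupS :: L), ?_⟩
      have htup : tupS.map Subtype.val = (List.range N).map (psi x) := by
        rw [htupS, List.map_pmap, List.pmap_eq_map]
      have hFF : FF δ (b, tupS :: L) = combine δ ((List.range N).map (psi x)) (FF δ (b, L)) := by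
        rw [FF, List.map_cons, List.foldr_cons, htup]; rfl
      rw [hFF, hbL]
      set t : List OM := (List.range N).map (psi x) with ht
      have hlen : t.length = N := by simp [ht]
      have hgetD : ∀ (n : ℕ) (d : OM), n < N → t.getD n d = psi x n := by
        intro n d hn
        rw [ht, List.getD_eq_getElem _ _ (by simpa using hn)]
        simp
      funext y
      by_cases hyδ : y < δ
      · have hEx : ∃ n, y < psi x n := ⟨N, lt_of_lt_of_le hyδ hz1ge⟩
        have htr : trace δ x y = E x y := if_pos hyδ
        rw [htr, E_def]
        rw [dif_pos hEx]
        set n₀ := Nat.find hEx with hn₀def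
        have hn₀ : y < psi x n₀ := Nat.find_spec hEx
        have hn₀N : n₀ ≤ N := Nat.find_min' hEx (lt_of_lt_of_le hyδ hz1ge)
        rcases lt_or_eq_of_le hn₀N with hlt | heq
        · -- n₀ < N : combine's find case
          have hprop : n₀ < t.length ∧ y < t.getD n₀ y :=
            ⟨hlt.trans_eq hlen.symm, lt_of_lt_of_eq hn₀ (hgetD n₀ y hlt).symm⟩
          have hc : ∃ n, n < t.length ∧ y < t.getD n y := ⟨n₀, hprop⟩
          have hfind : Nat.find hc = n₀ := by
            apply le_antisymm
            · exact Nat.find_min' hc hprop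
            · have h1 : Nat.find hc < N := (Nat.find_spec hc).1.trans_le hlen.le
              exact Nat.find_min' hEx
                (lt_of_lt_of_le (Nat.find_spec hc).2 (hgetD _ y h1).le)
          rw [combine, if_pos hyδ, dif_pos hc, hfind, hgetD n₀ y hlt]
        · -- n₀ = N : fallthrough case
          have hc : ¬ ∃ n, n < t.length ∧ y < t.getD n y := by
            rintro ⟨n, h1, h2⟩
            have h1' : n < N := h1.trans_le hlen.le
            have h2' : y < psi x n := lt_of_lt_of_le h2 (hgetD n y h1').le
            have := Nat.find_min' hEx h2'
            omega
          rw [combine, if_pos hyδ, dif_neg hc, hlen]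
          have : trace δ (psi x N) y = E (psi x N) y := if_pos hyδ
          rw [this, ← heq]
      · rw [combine, if_neg hyδ, trace, if_neg hyδ]

lemma trace_countable (δ : OM) : (Set.range (trace δ)).Countable := by
  have h1 : Set.range (trace δ) ⊆ Set.range (FF δ) := by
    rintro g ⟨x, rfl⟩; exact trace_mem δ x
  have : Countable ↥(Set.Iic δ) := (countable_Iic δ).to_subtype
  have : Countable ↥(Set.Iio δ) := (countable_Iio δ).to_subtype
  exact (Set.countable_range (FF δ)).mono h1

end
end Stmt6

namespace Stmt6
noncomputable section
attribute [local instance] Classical.propDecidable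

/-- the scale: `fS d x` dominates `d x` and super-grows past all earlier columns. -/
def fS (d : OM → ℕ → ℕ) : OM → ℕ → ℕ :=
  wfOM.fix (fun x IH =>
    Nat.rec (d x 0) (fun j prev =>
      max (prev + 1) (max (d x (j + 1))
        (1 + (Finset.range (j + 1)).sup
          (fun n => if h : psi x n < x then IH (psi x n) h (prev + 1) else 0)))))

lemma fS_unfold (d : OM → ℕ → ℕ) (x : OM) :
    fS d x = Nat.rec (d x 0) (fun j prev =>
      max (prev + 1) (max (d x (j + 1))
        (1 + (Finset.range (j + 1)).sup
          (fun n => if h : psi x n < x then fS d (psi x n) (prev + 1) else 0)))) := by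
  conv_lhs => rw [fS, WellFounded.fix_eq]
  rfl

lemma fS_zero (d : OM → ℕ → ℕ) (x : OM) : fS d x 0 = d x 0 := by
  rw [fS_unfold]
  rfl

lemma fS_succ (d : OM → ℕ → ℕ) (x : OM) (j : ℕ) :
    fS d x (j + 1) = max (fS d x j + 1) (max (d x (j + 1))
      (1 + (Finset.range (j + 1)).sup
        (fun n => if h : psi x n < x then fS d (psi x n) (fS d x j + 1) else 0))) := by
  conv_lhs => rw [fS_unfold d x]
  conv_rhs => rw [fS_unfold d x]

lemma fS_lt_succ (d : OM → ℕ → ℕ) (x : OM) (j : ℕ) : fS d x j < fS d x (j + 1) := by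
  rw [fS_succ]
  exact lt_of_lt_of_le (Nat.lt_succ_self _) (le_max_left _ _)

lemma fS_strictMono (d : OM → ℕ → ℕ) (x : OM) : StrictMono (fS d x) :=
  strictMono_nat_of_lt_succ (fS_lt_succ d x)

lemma le_fS (d : OM → ℕ → ℕ) (x : OM) (j : ℕ) : j ≤ fS d x j := by
  induction j with
  | zero => exact Nat.zero_le _
  | succ j ih => exact lt_of_le_of_lt ih (fS_lt_succ d x j)

lemma d_le_fS (d : OM → ℕ → ℕ) (x : OM) (j : ℕ) : d x j ≤ fS d x j := by
  cases j with
  | zero => exact (fS_zero d x).ge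
  | succ j => rw [fS_succ]; exact le_max_of_le_right (le_max_left _ _)

lemma fS_super (d : OM → ℕ → ℕ) {x : OM} {n j : ℕ} (hn : psi x n < x) (hj : n ≤ j) :
    fS d (psi x n) (fS d x j + 1) < fS d x (j + 1) := by
  have h1 : fS d (psi x n) (fS d x j + 1) ≤
      (Finset.range (j + 1)).sup
        (fun n => if h : psi x n < x then fS d (psi x n) (fS d x j + 1) else 0) := by
    have hmem : n ∈ Finset.range (j + 1) := Finset.mem_range.mpr (Nat.lt_succ_of_le hj)
    have := Finset.le_sup (f := fun n =>
      if h : psi x n < x then fS d (psi x n) (fS d x j + 1) else 0) hmem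
    simpa only [dif_pos hn] using this
  have h2 : fS d (psi x n) (fS d x j + 1) <
      1 + (Finset.range (j + 1)).sup
        (fun n => if h : psi x n < x then fS d (psi x n) (fS d x j + 1) else 0) := by
    omega
  have h3 : 1 + (Finset.range (j + 1)).sup
      (fun n => if h : psi x n < x then fS d (psi x n) (fS d x j + 1) else 0) ≤
      fS d x (j + 1) := by
    rw [fS_succ d x j]
    exact le_max_of_le_right (le_max_right _ _)
  exact lt_of_lt_of_le h2 h3

lemma exists_idx (d : OM → ℕ → ℕ) (x : OM) (w : ℕ) : ∃ m, w ≤ fS d x m :=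
  ⟨w, le_fS d x w⟩

/-- position of `w` among the intervals of `fS d x`. -/
def idx (d : OM → ℕ → ℕ) (x : OM) (w : ℕ) : ℕ := Nat.find (exists_idx d x w)

def chi0 (d : OM → ℕ → ℕ) (y x : OM) : ℕ := (Nat.unpair (idx d x (E x y))).1

def chi (d : OM → ℕ → ℕ) (a b : OM) : ℕ :=
  if a < b then chi0 d a b else chi0 d b a

lemma chi_symm (d : OM → ℕ → ℕ) (a b : OM) : chi d a b = chi d b a := by
  rcases lt_trichotomy a b with h | h | h
  · rw [chi, if_pos h, chi, if_neg (asymm h)]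
  · subst h; rfl
  · rw [chi, if_neg (asymm h), chi, if_pos h]

universe u

lemma exists_enum (A : Set (ℕ → ℕ)) (hA : #A = Cardinal.aleph 1) :
    ∃ d : OM.{u} → ℕ → ℕ, ∀ f ∈ A, ∃ x : OM.{u}, d x = f := by
  have h1 : Cardinal.lift.{u} #↥A = Cardinal.lift.{0} #OM.{u} := by
    rw [hA, Cardinal.mk_toType, Cardinal.card_ord, Cardinal.lift_aleph, Cardinal.lift_aleph,
      Ordinal.lift_one, Ordinal.lift_one]
  obtain ⟨eqv⟩ := Cardinal.lift_mk_eq'.mp h1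
  refine ⟨fun x => ((eqv.symm x : ↥A) : ℕ → ℕ), fun f hf => ⟨eqv ⟨f, hf⟩, by simp⟩⟩

end
end Stmt6

/-- If `𝔡 = ℵ₁`, there is a symmetric colouring `χ : ω₁ × ω₁ → ω` which is onto `ω`
on every `X × Y` with `|X| = ℵ₁` and `Y` countably infinite; i.e.
`(ω₁,ω₁) ↛ [(ω₁,ω)]^{1,1}_{ℵ₀}`. -/
theorem stmt_6 (h : dNum = Cardinal.aleph 1) :
    ∃ χ : (Cardinal.aleph 1).ord.ToType → (Cardinal.aleph 1).ord.ToType → ℕ,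
      (∀ a b, χ a b = χ b a) ∧
      ∀ X : Set (Cardinal.aleph 1).ord.ToType, #X = Cardinal.aleph 1 →
        ∀ Y : Set (Cardinal.aleph 1).ord.ToType, Y.Countable → Y.Infinite →
          ∀ k : ℕ, ∃ x ∈ X, ∃ y ∈ Y, χ x y = k := by
  classical
  -- extract a dominating family of size ℵ₁
  have hne : {c | ∃ A : Set (ℕ → ℕ), #A = c ∧
      ∀ g : ℕ → ℕ, ∃ f ∈ A, {n : ℕ | f n < g n}.Finite}.Nonempty :=
    ⟨#(Set.univ : Set (ℕ → ℕ)), Set.univ, rfl,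
      fun g => ⟨g, Set.mem_univ g, by simp⟩⟩
  have hmem := csInf_mem hne
  rw [show sInf {c | ∃ A : Set (ℕ → ℕ), #A = c ∧
      ∀ g : ℕ → ℕ, ∃ f ∈ A, {n : ℕ | f n < g n}.Finite} = dNum from rfl, h] at hmem
  obtain ⟨A, hA, hdom⟩ := hmem
  obtain ⟨d, hdenum⟩ := Stmt6.exists_enum A hA
  have hdom' : ∀ g : ℕ → ℕ, ∃ x : Stmt6.OM, {n : ℕ | d x n < g n}.Finite := by
    intro g
    obtain ⟨f, hf, hfin⟩ := hdom g
    obtain ⟨x, hx⟩ := hdenum f hf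
    exact ⟨x, by rwa [hx]⟩
  refine ⟨Stmt6.chi d, Stmt6.chi_symm d, ?_⟩
  intro X hX Y hYc hYi k
  -- a strict upper bound δ for Y
  obtain ⟨δ, hδ⟩ : ∃ δ : Stmt6.OM, ∀ y ∈ Y, y < δ := by
    by_contra hcon
    push_neg at hcon
    have hcover : (Set.univ : Set Stmt6.OM) ⊆ ⋃ y ∈ Y, Set.Iic y := by
      intro b _
      obtain ⟨y, hyY, hy⟩ := hcon b
      exact Set.mem_biUnion hyY hy
    have hctble : (Set.univ : Set Stmt6.OM).Countable :=
      Set.Countable.mono hcover (hYc.biUnion (fun y _ => Stmt6.countable_Iic y))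
    have h1 : #Stmt6.OM ≤ ℵ₀ := by
      have hcnt : Countable Stmt6.OM := Set.countable_univ_iff.mp hctble
      exact Cardinal.mk_le_aleph0
    rw [Cardinal.mk_toType, Cardinal.card_ord] at h1
    exact absurd h1 Cardinal.aleph0_lt_aleph_one.not_ge
  -- enumerate the possible traces on Iio δ
  obtain ⟨τ, hτ⟩ := (Stmt6.trace_countable δ).exists_eq_range ⟨Stmt6.trace δ δ, δ, rfl⟩
  set SS : ℕ → Set ℕ := fun i => (τ i) '' Y with hSS
  set G : ℕ → ℕ := fun m =>
    (Finset.range (m + 1)).sup (fun i => Nat.nth (· ∈ SS i) m + 1) with hG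
  obtain ⟨α₀, hα₀⟩ := hdom' G
  obtain ⟨T₁, hT₁⟩ : ∃ T₁, ∀ m, T₁ ≤ m → G m ≤ d α₀ m := by
    obtain ⟨b, hb⟩ := hα₀.bddAbove
    refine ⟨b + 1, fun m hm => ?_⟩
    by_contra hlt
    push_neg at hlt
    have hmb : m ≤ b := hb hlt
    omega
  -- pick x ∈ X above δ and α₀
  obtain ⟨x, hxX, hxbad⟩ : ∃ x ∈ X, x ∉ Set.Iic δ ∪ Set.Iic α₀ := by
    by_contra hcon
    push_neg at hcon
    have hXc : X.Countable :=
      Set.Countable.mono hcon ((Stmt6.countable_Iic δ).union (Stmt6.countable_Iic α₀))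
    rw [Cardinal.countable_iff_lt_aleph_one, hX] at hXc
    exact lt_irrefl _ hXc
  have hδx : δ < x := not_le.mp (fun hc => hxbad (Or.inl hc))
  have hα₀x : α₀ < x := not_le.mp (fun hc => hxbad (Or.inr hc))
  have hYsub : Y ⊆ Set.Iio x := fun y hy => lt_trans (hδ y hy) hδx
  -- the trace of column x
  obtain ⟨i, hi⟩ : ∃ i, τ i = Stmt6.trace δ x := by
    have hmem2 : Stmt6.trace δ x ∈ Set.range τ := by
      rw [← hτ]; exact Set.mem_range_self x
    exact hmem2
  have himg : SS i = (Stmt6.E x) '' Y := by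
    rw [hSS]
    apply Set.image_congr
    intro y hy
    rw [hi]
    simp only [Stmt6.trace]
    rw [if_pos (hδ y hy)]
  have hSinf : {n | n ∈ SS i}.Infinite := by
    rw [Set.setOf_mem_eq, himg]
    exact hYi.image ((Stmt6.E_injOn x).mono hYsub)
  obtain ⟨a, ha⟩ := Stmt6.psi_surj hα₀x
  set J := max a (max T₁ i) with hJ
  set c := Nat.pair k (J + 1) with hc
  have hc1 : J + 1 ≤ c := Nat.right_le_pair k (J + 1)
  set j := c - 1 with hj
  have hj1 : j + 1 = c := by omega
  have hjJ : J ≤ j := by omega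
  set T := Stmt6.fS d x j + 1 with hT
  have hjT : j < T := by
    have := Stmt6.le_fS d x j; omega
  set w := Nat.nth (· ∈ SS i) T with hw
  have hwmem : w ∈ SS i := Nat.nth_mem_of_infinite hSinf T
  have hTw : T ≤ w := (Nat.nth_strictMono hSinf).le_apply
  have hw2 : w < Stmt6.fS d x (j + 1) := by
    have h1 : Nat.nth (· ∈ SS i) T + 1 ≤ G T := by
      have hiJ : i ≤ J := le_max_of_le_right (le_max_right T₁ i)
      have hiT : i ∈ Finset.range (T + 1) := by
        rw [Finset.mem_range]; omega
      exact Finset.le_sup (f := fun i => Nat.nth (· ∈ SS i) T + 1) hiT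
    have h2 : G T ≤ d α₀ T := by
      apply hT₁
      have : T₁ ≤ J := le_max_of_le_right (le_max_left T₁ i)
      omega
    have h3 : d α₀ T ≤ Stmt6.fS d α₀ T := Stmt6.d_le_fS d α₀ T
    have h4 : Stmt6.fS d α₀ T < Stmt6.fS d x (j + 1) := by
      have hpa : Stmt6.psi x a < x := by rw [ha]; exact hα₀x
      have haj : a ≤ j := le_trans (le_max_left _ _) hjJ
      have h5 := Stmt6.fS_super d hpa haj
      rwa [ha] at h5
    omega
  have hidx : Stmt6.idx d x w = j + 1 := by
    apply le_antisymm
    · exact Nat.find_min' _ hw2.le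
    · by_contra hlt
      push_neg at hlt
      have hle : Stmt6.idx d x w ≤ j := by omega
      have hspec : w ≤ Stmt6.fS d x (Stmt6.idx d x w) :=
        Nat.find_spec (Stmt6.exists_idx d x w)
      have hmono : Stmt6.fS d x (Stmt6.idx d x w) ≤ Stmt6.fS d x j :=
        (Stmt6.fS_strictMono d x).monotone hle
      omega
  obtain ⟨y₀, hy₀Y, hy₀⟩ := hwmem
  have hEy₀ : Stmt6.E x y₀ = w := by
    rw [← hy₀, hi]
    simp only [Stmt6.trace]
    rw [if_pos (hδ y₀ hy₀Y)]
  refine ⟨x, hxX, y₀, hy₀Y, ?_⟩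
  have hxy : ¬ x < y₀ := asymm (hYsub hy₀Y)
  simp only [Stmt6.chi, if_neg hxy, Stmt6.chi0]
  rw [hEy₀, hidx, hj1, hc, Nat.unpair_pair]
end

section
/- Let κ be a regular uncountable cardinal with κ > 𝔅, where 𝔅 = stick = min{|X| : X ⊆ [ω₁]^ω and every uncountable Y ⊆ ω₁ contains some member of X}. Then for every coloring c : κ × ω₁ → 2 there exist B ⊆ κ of cardinality κ and a countably infinite D ⊆ ω₁ such that c is constant on B × D. That is, (κ, ω₁) → ((κ, ω))^{1,1}_2. -/
open Cardinal

/-- The stick number: the least cardinality of a family of countably infinite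
subsets of `ω₁` such that every uncountable subset of `ω₁` contains a member. -/
noncomputable def stickNum : Cardinal :=
  sInf {c | ∃ X : Set (Set (Cardinal.aleph 1).ord.ToType), #X = c ∧
    (∀ x ∈ X, x.Countable ∧ x.Infinite) ∧
    ∀ Y : Set (Cardinal.aleph 1).ord.ToType, ¬ Y.Countable → ∃ x ∈ X, x ⊆ Y}

universe u v

/-- The defining set of `stickNum` is nonempty. -/
lemma stick_set_nonempty : {d | ∃ X : Set (Set (Cardinal.aleph 1 : Cardinal.{u}).ord.ToType),
    Cardinal.mk X = d ∧ (∀ x ∈ X, x.Countable ∧ x.Infinite) ∧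
    ∀ Y : Set (Cardinal.aleph 1 : Cardinal.{u}).ord.ToType,
      ¬ Y.Countable → ∃ x ∈ X, x ⊆ Y}.Nonempty := by
  refine ⟨_, {x | x.Countable ∧ x.Infinite}, rfl, fun x hx => hx, ?_⟩
  intro Y hY
  have hInf : Y.Infinite := fun h => hY h.countable
  refine ⟨Set.range (fun n => ((Set.Infinite.natEmbedding Y hInf n : Y) : _)),
    ⟨Set.countable_range _, Set.infinite_range_of_injective
      (Subtype.val_injective.comp (Set.Infinite.natEmbedding Y hInf).injective)⟩, ?_⟩
  rintro _ ⟨n, rfl⟩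
  exact (Set.Infinite.natEmbedding Y hInf n).2

/-- A stick family on `ω₁` in universe `v`, indexed by a type of cardinality
`stickNum.{u}` in universe `u`. -/
lemma stick_family : ∃ (ι : Type u)
    (F : ι → Set (Cardinal.aleph 1 : Cardinal.{v}).ord.ToType),
    Cardinal.mk ι ≤ stickNum.{u} ∧ (∀ i, (F i).Countable ∧ (F i).Infinite) ∧
    ∀ Y : Set (Cardinal.aleph 1 : Cardinal.{v}).ord.ToType,
      ¬ Y.Countable → ∃ i, F i ⊆ Y := by
  obtain ⟨X, hXcard, hXprop, hXcov⟩ := csInf_mem stick_set_nonempty.{u}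
  -- an equivalence between the two incarnations of ω₁
  have hlift : Cardinal.lift.{v} #(Cardinal.aleph 1 : Cardinal.{u}).ord.ToType
      = Cardinal.lift.{u} #(Cardinal.aleph 1 : Cardinal.{v}).ord.ToType := by
    rw [Cardinal.mk_ord_toType, Cardinal.mk_ord_toType, Cardinal.lift_aleph,
      Cardinal.lift_aleph, Ordinal.lift_one, Ordinal.lift_one]
  obtain ⟨e⟩ := Cardinal.lift_mk_eq'.1 hlift
  refine ⟨X, fun x => e '' (x : Set _), le_of_eq hXcard, ?_, ?_⟩
  · intro x
    exact ⟨(hXprop _ x.2).1.image e, (hXprop _ x.2).2.image e.injective.injOn⟩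
  · intro Y hY
    have hpre : ¬ (e ⁻¹' Y).Countable := by
      intro h
      apply hY
      have : Y = e '' (e ⁻¹' Y) := by
        rw [Equiv.image_preimage]
      rw [this]
      exact h.image e
    obtain ⟨x, hx, hxsub⟩ := hXcov _ hpre
    refine ⟨⟨x, hx⟩, ?_⟩
    rintro _ ⟨δ, hδ, rfl⟩
    exact hxsub hδ

/-- For regular `κ > stick`, every `c : κ × ω₁ → 2` is constant on some `B × D`
with `|B| = κ` and `D` countably infinite: `(κ,ω₁) → ((κ,ω))^{1,1}_2`. -/
theorem stmt_8 (κ : Cardinal) (hreg : κ.IsRegular) (hgt : stickNum < κ)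
    (c : κ.ord.ToType → (Cardinal.aleph 1).ord.ToType → Bool) :
    ∃ B : Set κ.ord.ToType, #B = κ ∧
      ∃ D : Set (Cardinal.aleph 1).ord.ToType, D.Countable ∧ D.Infinite ∧
        ∃ i : Bool, ∀ b ∈ B, ∀ d ∈ D, c b d = i := by
  obtain ⟨ι, F, hιcard, hFprop, hFcov⟩ := stick_family
  -- ω₁ is uncountable
  have hΩunc : ¬ (Set.univ : Set (Cardinal.aleph 1).ord.ToType).Countable := by
    rw [Set.countable_univ_iff]
    intro h
    have h1 : #(Cardinal.aleph 1).ord.ToType ≤ ℵ₀ := Cardinal.mk_le_aleph0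
    rw [Cardinal.mk_ord_toType] at h1
    exact absurd (Cardinal.aleph0_lt_aleph_one.trans_le h1) (lt_irrefl _)
  -- for each α pick a color and a member of the family
  have hsel : ∀ α : κ.ord.ToType, ∃ p : Bool × ι, F p.2 ⊆ {δ | c α δ = p.1} := by
    intro α
    by_cases hα : {δ | c α δ = true}.Countable
    · have hfalse : ¬ {δ | c α δ = false}.Countable := by
        intro h
        apply hΩunc
        have : (Set.univ : Set (Cardinal.aleph 1).ord.ToType)
            = {δ | c α δ = true} ∪ {δ | c α δ = false} := by
          ext δ; cases h' : c α δ <;> simp [h']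
        rw [this]
        exact hα.union h
      obtain ⟨i, hisub⟩ := hFcov _ hfalse
      exact ⟨(false, i), hisub⟩
    · obtain ⟨i, hisub⟩ := hFcov _ hα
      exact ⟨(true, i), hisub⟩
  choose g hg using hsel
  have hKcard : #κ.ord.ToType = κ := Cardinal.mk_ord_toType κ
  have hsmall : #(Bool × ι) < κ := by
    rw [Cardinal.mk_prod]
    refine Cardinal.mul_lt_of_lt hreg.aleph0_le ?_ ?_
    · exact (Cardinal.lift_lt_aleph0.2 (Cardinal.lt_aleph0.2 ⟨2, by simp⟩)).trans_le
        hreg.aleph0_le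
    · simpa using lt_of_le_of_lt hιcard hgt
  -- some fiber of g has size κ
  have hfib : ∃ p : Bool × ι, κ ≤ #(g ⁻¹' {p}) := by
    by_contra h
    push_neg at h
    have h1 : #κ.ord.ToType = Cardinal.sum (fun p : Bool × ι => #(g ⁻¹' {p})) := by
      rw [← Cardinal.mk_sigma]
      exact Cardinal.mk_congr (Equiv.sigmaFiberEquiv g).symm
    have h2 : Cardinal.sum (fun p : Bool × ι => #(g ⁻¹' {p})) < κ :=
      Cardinal.sum_lt_of_isRegular hreg hsmall (fun p => h p)
    rw [← h1, hKcard] at h2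
    exact lt_irrefl _ h2
  obtain ⟨p, hp⟩ := hfib
  refine ⟨g ⁻¹' {p}, le_antisymm ((Cardinal.mk_set_le _).trans hKcard.le) hp, F p.2,
    (hFprop p.2).1, (hFprop p.2).2, p.1, ?_⟩
  intro b hb d hd
  have hgb : g b = p := hb
  have := hg b
  rw [hgb] at this
  exact this hd
end

section
/- For κ = ω, the unbounding number 𝔟 is at most the reaping number 𝔯. -/
open Cardinal

/-- The reaping number `𝔯`. -/
noncomputable def rNum : Cardinal :=
  sInf {c | ∃ A : Set (Set ℕ), #A = c ∧ (∀ Y ∈ A, Y.Infinite) ∧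
    ∀ X : Set ℕ, X.Infinite → ∃ Y ∈ A, (Y ∩ X).Finite ∨ (Y \ X).Finite}

/-- The "next element" function of a set `Y ⊆ ℕ`. -/
noncomputable def nextFn (Y : Set ℕ) (n : ℕ) : ℕ := sInf {m | m ∈ Y ∧ n < m}

lemma nextFn_spec {Y : Set ℕ} (hY : Y.Infinite) (n : ℕ) :
    nextFn Y n ∈ Y ∧ n < nextFn Y n := by
  have hne : {m | m ∈ Y ∧ n < m}.Nonempty := by
    obtain ⟨m, hm, hlt⟩ := hY.exists_gt n
    exact ⟨m, hm, hlt⟩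
  exact Nat.sInf_mem hne

lemma unbounded_of_forall_gt {s : Set ℕ} (h : ∀ n, ∃ m ∈ s, n < m) : s.Infinite := by
  apply Set.infinite_of_not_bddAbove
  rintro ⟨b, hb⟩
  obtain ⟨m, hm, hlt⟩ := h b
  exact absurd (hb hm) (not_le.mpr hlt)

/-- `𝔟 ≤ 𝔯`. -/
theorem stmt_11 : bNum ≤ rNum := by
  -- the reaping set is nonempty
  have hne : {c | ∃ A : Set (Set ℕ), #A = c ∧ (∀ Y ∈ A, Y.Infinite) ∧
      ∀ X : Set ℕ, X.Infinite → ∃ Y ∈ A, (Y ∩ X).Finite ∨ (Y \ X).Finite}.Nonempty := by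
    refine ⟨#{Y : Set ℕ | Y.Infinite}, {Y | Y.Infinite}, rfl, fun Y hY => hY, fun X hX => ?_⟩
    exact ⟨X, hX, Or.inr (by simp)⟩
  obtain ⟨A, hAcard, hAinf, hAreap⟩ := csInf_mem hne
  -- the candidate unbounded family
  set B : Set (ℕ → ℕ) := nextFn '' A with hB
  have hmem : #B ∈ {c | ∃ A : Set (ℕ → ℕ), #A = c ∧
      ∀ g : ℕ → ℕ, ∃ f ∈ A, {n : ℕ | g n < f n}.Infinite} := by
    refine ⟨B, rfl, fun g => ?_⟩
    by_contra hcon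
    push_neg at hcon
    -- every `nextFn Y` is eventually dominated by `g`
    have hdom : ∀ Y ∈ A, ∃ N, ∀ n, N ≤ n → nextFn Y n ≤ g n := by
      intro Y hY
      have hf : {n : ℕ | g n < nextFn Y n}.Finite :=
        hcon (nextFn Y) ⟨Y, hY, rfl⟩
      obtain ⟨N, hN⟩ := hf.bddAbove
      refine ⟨N + 1, fun n hn => ?_⟩
      by_contra hlt
      have := hN (Set.mem_setOf.mpr (not_le.mp hlt))
      omega
    -- a monotone strictly increasing majorant of g
    set H : ℕ → ℕ := fun n => (Finset.range (n + 1)).sup (fun m => g m + m + 1) with hH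
    have hHg : ∀ n, g n + n + 1 ≤ H n := fun n => by
      have : n ∈ Finset.range (n + 1) := by simp
      exact Finset.le_sup (f := fun m => g m + m + 1) this
    have hHmono : Monotone H := fun m n h =>
      Finset.sup_mono (Finset.range_subset_range.mpr (by omega))
    -- the interval endpoints
    set a : ℕ → ℕ := fun k => Nat.rec 0 (fun _ x => H x) k with ha
    have ha0 : a 0 = 0 := rfl
    have haS : ∀ k, a (k + 1) = H (a k) := fun k => rfl
    have haSM : StrictMono a := by
      apply strictMono_nat_of_lt_succ
      intro k
      rw [haS]
      have := hHg (a k)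
      omega
    -- the test set
    set X : Set ℕ := ⋃ k, Set.Ioc (a (2 * k)) (a (2 * k + 1)) with hX
    have hak : ∀ k, k ≤ a k := fun k => haSM.le_apply
    have hbig : ∀ n k : ℕ, n ≤ k → n ≤ a k := fun n k h => le_trans h (hak k)
    have hXinf : X.Infinite := by
      apply unbounded_of_forall_gt
      intro n
      have h1 : a (2 * n) < a (2 * n + 1) := haSM (Nat.lt_succ_self _)
      exact ⟨a (2 * n + 1), Set.mem_iUnion.mpr ⟨n, h1, le_rfl⟩,
        lt_of_le_of_lt (hbig n (2 * n) (by omega)) h1⟩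
    obtain ⟨Y, hYA, hYreap⟩ := hAreap X hXinf
    obtain ⟨N, hN⟩ := hdom Y hYA
    -- `Y` meets every interval `Ioc (a k) (a (k+1))` with `a k ≥ N`
    have hmeet : ∀ k, N ≤ a k → ∃ m ∈ Y, m ∈ Set.Ioc (a k) (a (k + 1)) := by
      intro k hk
      obtain ⟨hmY, hmgt⟩ := nextFn_spec (hAinf Y hYA) (a k)
      refine ⟨nextFn Y (a k), hmY, hmgt, ?_⟩
      rw [haS]
      calc nextFn Y (a k) ≤ g (a k) := hN _ hk
        _ ≤ H (a k) := by have := hHg (a k); omega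
    -- `Y ∩ X` is infinite
    have hYX : (Y ∩ X).Infinite := by
      apply unbounded_of_forall_gt
      intro n
      obtain ⟨m, hmY, hm1, hm2⟩ := hmeet (2 * (max n N))
        (hbig N (2 * max n N) (by omega))
      refine ⟨m, ⟨hmY, Set.mem_iUnion.mpr ⟨max n N, hm1, hm2⟩⟩, ?_⟩
      have : n ≤ a (2 * max n N) := hbig n (2 * max n N) (by omega)
      omega
    -- `Y \ X` is infinite
    have hdisj : ∀ k, Set.Ioc (a (2 * k + 1)) (a (2 * k + 2)) ∩ X = ∅ := by
      intro k
      ext m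
      simp only [Set.mem_inter_iff, Set.mem_empty_iff_false, iff_false, hX,
        Set.mem_iUnion, Set.mem_Ioc, not_and]
      rintro ⟨h1, h2⟩ ⟨j, hj1, hj2⟩
      rcases le_or_gt j k with h | h
      · have : a (2 * j + 1) ≤ a (2 * k + 1) :=
          haSM.monotone (show 2 * j + 1 ≤ 2 * k + 1 by omega)
        omega
      · have : a (2 * k + 2) ≤ a (2 * j) :=
          haSM.monotone (show 2 * k + 2 ≤ 2 * j by omega)
        omega
    have hYXc : (Y \ X).Infinite := by
      apply unbounded_of_forall_gt
      intro n
      obtain ⟨m, hmY, hm1, hm2⟩ := hmeet (2 * (max n N) + 1)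
        (hbig N (2 * max n N + 1) (by omega))
      have hmX : m ∉ X := by
        intro hmX
        have := hdisj (max n N)
        have : m ∈ Set.Ioc (a (2 * max n N + 1)) (a (2 * max n N + 2)) ∩ X :=
          ⟨⟨hm1, hm2⟩, hmX⟩
        rw [hdisj (max n N)] at this
        exact this
      refine ⟨m, ⟨hmY, hmX⟩, ?_⟩
      have : n ≤ a (2 * max n N + 1) := hbig n (2 * max n N + 1) (by omega)
      omega
    rcases hYreap with h | h
    · exact hYX h
    · exact hYXc h
  calc bNum ≤ #B := csInf_le (OrderBot.bddBelow _) hmem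
    _ ≤ #A := Cardinal.mk_image_le
    _ = rNum := hAcard
end

section
/- If κ is a regular cardinal, λ = κ⁺, and λ² ↛ (λκ, 4)² holds (witnessed by some 2-coloring of pairs of λ²), then for every ordinal α < λ²·κ we have α ↛ (λκ, 4)². -/
open Cardinal

universe u

/-- `negPart θ β` says `θ ↛ (β, 4)²`: there is a 2-colouring of pairs of
ordinals below `θ` with no 0-homogeneous subset of order type `β` and no
1-homogeneous quadruple. -/
def negPart (θ β : Ordinal.{u}) : Prop :=
  ∃ c : Ordinal.{u} → Ordinal.{u} → Bool,
    (¬ ∃ S : β.ToType → Ordinal.{u},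
      StrictMono S ∧ (∀ i, S i < θ) ∧
      ∀ i j, S i < S j → c (S i) (S j) = false) ∧
    (¬ ∃ Q : Finset Ordinal.{u}, ↑Q ⊆ Set.Iio θ ∧ Q.card = 4 ∧
      ∀ a ∈ Q, ∀ b ∈ Q, a < b → c a b = true)

/-- Ordinal division is monotone in the dividend. -/
lemma aux_div_mono {a b c : Ordinal.{u}} (h : a ≤ b) : a / c ≤ b / c := by
  rcases eq_or_ne c 0 with rfl | hc
  · simp [Ordinal.div_zero]
  · rw [Ordinal.div_le hc]
    calc a ≤ b := h
    _ = c * (b / c) + b % c := (Ordinal.div_add_mod b c).symm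
    _ < c * (b / c) + c := by
        exact add_lt_add_right (Ordinal.mod_lt b hc) _
    _ = c * Order.succ (b / c) := by rw [Ordinal.mul_succ]

/-- If `κ` is regular, `λ = κ⁺` and `λ² ↛ (λκ, 4)²`, then `α ↛ (λκ, 4)²`
for every ordinal `α < λ²·κ`. -/
theorem stmt_17 (κ : Cardinal.{u}) (hκ : κ.IsRegular)
    (h : negPart ((Order.succ κ).ord * (Order.succ κ).ord)
      ((Order.succ κ).ord * κ.ord)) :
    ∀ α < (Order.succ κ).ord * (Order.succ κ).ord * κ.ord,
      negPart α ((Order.succ κ).ord * κ.ord) := by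
  obtain ⟨c, hc0, hc1⟩ := h
  intro α hα
  set L : Ordinal.{u} := (Order.succ κ).ord with hLdef
  set K : Ordinal.{u} := κ.ord with hKdef
  set Λ : Ordinal.{u} := L * L with hΛdef
  set B : Ordinal.{u} := L * K with hBdef
  have hκ0 : ℵ₀ ≤ κ := hκ.aleph0_le
  have hL0 : L ≠ 0 := by
    simp only [hLdef, ne_eq, Cardinal.ord_eq_zero]
    exact (Order.succ_ne_bot κ)
  have hK0 : K ≠ 0 := by
    simp only [hKdef, ne_eq, Cardinal.ord_eq_zero]
    exact hκ.pos.ne'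
  have hΛ0 : Λ ≠ 0 := mul_ne_zero hL0 hL0
  have hKlim : Order.IsSuccLimit K := Cardinal.isSuccLimit_ord hκ0
  have hKprin : Ordinal.IsPrincipal (· + ·) K := Ordinal.isPrincipal_add_ord hκ0
  -- every ordinal `< B` is below `L * s` for some `s < K`
  have hdivK : ∀ {x : Ordinal.{u}}, x < B → x / L < K := by
    intro x hx
    exact (Ordinal.div_lt hL0).2 hx
  have hxlt : ∀ (x : Ordinal.{u}), x < L * (x / L + 1) := by
    intro x
    calc x = L * (x / L) + x % L := (Ordinal.div_add_mod x L).symm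
    _ < L * (x / L) + L := add_lt_add_right (Ordinal.mod_lt x hL0) _
    _ = L * (x / L + 1) := by rw [mul_add, mul_one]
  -- `B` is additively indecomposable
  have hBprin : ∀ {a b : Ordinal.{u}}, a < B → b < B → a + b < B := by
    intro a b ha hb
    have h1 : a + b < L * (a / L + 1) + L * (b / L + 1) :=
      (add_lt_add_right (hxlt b) a).trans_le
        (add_le_add_left (hxlt a).le _)
    have h2 : L * (a / L + 1) + L * (b / L + 1) = L * ((a / L + 1) + (b / L + 1)) := by
      rw [mul_add L (a / L + 1)]
    have h3 : (a / L + 1) + (b / L + 1) < K := by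
      have ha' : a / L + 1 < K := hKlim.succ_lt (hdivK ha)
      have hb' : b / L + 1 < K := hKlim.succ_lt (hdivK hb)
      exact hKprin ha' hb'
    calc a + b < L * ((a / L + 1) + (b / L + 1)) := h1.trans_le h2.le
    _ ≤ L * K := mul_le_mul_right h3.le _
  -- the transferred colouring
  refine ⟨fun x y => if x / Λ = y / Λ then c (x % Λ) (y % Λ) else false, ?_, ?_⟩
  · -- no 0-homogeneous set of type `B`
    rintro ⟨S, hSmono, hSlt, hSfalse⟩
    have hBne : B ≠ 0 := mul_ne_zero hL0 hK0
    have : Nonempty B.ToType := Ordinal.nonempty_toType_iff.2 hBne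
    set e := (Ordinal.ToType.mk (o := B)) with hedef
    set q : B.ToType → Ordinal.{u} := fun i => S i / Λ with hqdef
    have hqmono : Monotone q := fun i j hij => aux_div_mono (hSmono.monotone hij)
    set β0 : Ordinal.{u} := α / Λ with hβ0def
    have hβ0K : β0 < K := (Ordinal.div_lt hΛ0).2 hα
    have hqle : ∀ i, q i ≤ β0 := fun i => aux_div_mono (hSlt i).le
    -- some value of `q` is attained cofinally
    have key : ∃ v : Ordinal.{u}, ∀ i : B.ToType, ∃ j, i ≤ j ∧ q j = v := by
      by_contra hno
      push_neg at hno
      choose bd hbd using hno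
      -- index the possible values by `(β0+1).ToType`
      let e₂ := (Ordinal.ToType.mk (o := β0 + 1))
      let f : (β0 + 1).ToType → Ordinal.{u} :=
        fun k => ((e.symm (bd ((e₂.symm k : Set.Iio (β0 + 1)) : Ordinal.{u}))) :
          Set.Iio B)
      have hfB : ∀ k, f k < B := fun k => (e.symm _).2
      have hsupK : (⨆ k, f k / L + 1) < K := by
        refine Cardinal.iSup_lt_ord_of_isRegular hκ ?_ ?_
        · rw [Cardinal.mk_toType]
          rw [← Cardinal.lt_ord]
          exact hKlim.succ_lt hβ0K
        · intro k
          exact hKlim.succ_lt (hdivK (hfB k))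
      have hsupB : L * (⨆ k, f k / L + 1) < B :=
        mul_lt_mul_of_pos_left hsupK (pos_iff_ne_zero.2 hL0)
      have hfle : ∀ k, f k ≤ L * (⨆ k, f k / L + 1) := by
        intro k
        refine (hxlt (f k)).le.trans ?_
        exact mul_le_mul_right (Ordinal.le_iSup (fun k => f k / L + 1) k) _
      -- a point beyond all the bounds
      obtain ⟨j, hj⟩ : ∃ j : B.ToType,
          ((e.symm j : Set.Iio B) : Ordinal.{u}) = L * (⨆ k, f k / L + 1) :=
        ⟨e ⟨_, hsupB⟩, by rw [OrderIso.symm_apply_apply]⟩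
      have hqjlt : q j < β0 + 1 := by
        rw [Ordinal.add_one_eq_succ]
        exact Order.lt_succ_iff.2 (hqle j)
      have h4 : ((e₂.symm (e₂ ⟨q j, hqjlt⟩) : Set.Iio (β0 + 1)) : Ordinal.{u}) = q j := by
        rw [OrderIso.symm_apply_apply]
      have h5' : f (e₂ ⟨q j, hqjlt⟩) =
          ((e.symm (bd (q j)) : Set.Iio B) : Ordinal.{u}) := by
        show ((e.symm (bd ((e₂.symm (e₂ ⟨q j, hqjlt⟩) : Set.Iio (β0 + 1)) :
          Ordinal.{u}))) : Set.Iio B).1 = _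
        rw [h4]
      have h5 : ((e.symm (bd (q j)) : Set.Iio B) : Ordinal.{u}) ≤
          ((e.symm j : Set.Iio B) : Ordinal.{u}) := by
        rw [hj, ← h5']
        exact hfle _
      have h6 : bd (q j) ≤ j := e.symm.le_iff_le.1 (Subtype.coe_le_coe.1 h5)
      exact hbd (q j) j h6 rfl
    obtain ⟨v, hv⟩ := key
    -- `q` is eventually equal to `v`
    obtain ⟨i0, -, hi0⟩ := hv (Classical.arbitrary B.ToType)
    have hqconst : ∀ j, i0 ≤ j → q j = v := by
      intro j hj
      obtain ⟨j', hjj', hqj'⟩ := hv j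
      have h1 : q i0 ≤ q j := hqmono hj
      have h2 : q j ≤ q j' := hqmono hjj'
      rw [hi0] at h1
      rw [hqj'] at h2
      exact le_antisymm h2 h1
    -- translate the final segment back to `B.ToType`
    set ι0 : Ordinal.{u} := ((e.symm i0 : Set.Iio B) : Ordinal.{u}) with hι0def
    have hι0B : ι0 < B := (e.symm i0).2
    set T : B.ToType → B.ToType :=
      fun k => e ⟨ι0 + ((e.symm k : Set.Iio B) : Ordinal.{u}),
        Set.mem_Iio.2 (hBprin hι0B (Set.mem_Iio.1 (e.symm k).2))⟩ with hTdef
    have hTmono : StrictMono T := by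
      intro k k' hkk'
      rw [hTdef]
      apply e.lt_iff_lt.2
      exact Subtype.mk_lt_mk.2 (add_lt_add_right
        (Subtype.coe_lt_coe.2 (e.symm.lt_iff_lt.2 hkk')) _)
    have hTge : ∀ k, i0 ≤ T k := by
      intro k
      have h1 : ι0 ≤ ι0 + ((e.symm k : Set.Iio B) : Ordinal.{u}) :=
        le_self_add
      have h2 : e.symm i0 ≤ e.symm (T k) := by
        rw [hTdef, OrderIso.symm_apply_apply]
        exact Subtype.coe_le_coe.1 (by simp only [hι0def] at h1 ⊢; exact h1)
      exact e.symm.le_iff_le.1 h2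
    have hqT : ∀ k, S (T k) / Λ = v := fun k => hqconst (T k) (hTge k)
    have hdecomp : ∀ k, Λ * v + S (T k) % Λ = S (T k) := by
      intro k
      conv_rhs => rw [← Ordinal.div_add_mod (S (T k)) Λ]
      rw [hqT k]
    -- the 0-homogeneous set for the original colouring
    refine hc0 ⟨fun k => S (T k) % Λ, ?_, ?_, ?_⟩
    · intro k k' hkk'
      have h1 : S (T k) < S (T k') := hSmono (hTmono hkk')
      rw [← hdecomp k, ← hdecomp k'] at h1
      exact (add_lt_add_iff_left (Λ * v)).1 h1
    · intro k
      exact Ordinal.mod_lt _ hΛ0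
    · intro k k' hlt
      have h1 : S (T k) < S (T k') := by
        rw [← hdecomp k, ← hdecomp k']
        exact add_lt_add_right hlt _
      have h2 := hSfalse (T k) (T k') h1
      dsimp only at h2
      rw [hqT k, hqT k', if_pos rfl] at h2
      exact h2
  · -- no 1-homogeneous quadruple
    rintro ⟨Q, hQsub, hQcard, hQtrue⟩
    have hsameq : ∀ a ∈ Q, ∀ b ∈ Q, a < b → a / Λ = b / Λ ∧ c (a % Λ) (b % Λ) = true := by
      intro a ha b hb hab
      have := hQtrue a ha b hb hab
      dsimp only at this
      by_cases hq : a / Λ = b / Λ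
      · rw [if_pos hq] at this
        exact ⟨hq, this⟩
      · rw [if_neg hq] at this
        exact absurd this (by simp)
    have hinj : Set.InjOn (· % Λ) ↑Q := by
      intro a ha b hb hmod
      dsimp only at hmod
      rcases lt_trichotomy a b with hlt | heq | hlt
      · obtain ⟨hq, -⟩ := hsameq a ha b hb hlt
        have := Ordinal.div_add_mod a Λ
        rw [hq, hmod, Ordinal.div_add_mod] at this
        exact this.symm
      · exact heq
      · obtain ⟨hq, -⟩ := hsameq b hb a ha hlt
        have := Ordinal.div_add_mod b Λ
        rw [hq, ← hmod, Ordinal.div_add_mod] at this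
        exact this
    refine hc1 ⟨Q.image (· % Λ), ?_, ?_, ?_⟩
    · intro x hx
      simp only [Finset.coe_image, Set.mem_image, Finset.mem_coe] at hx
      obtain ⟨a, -, rfl⟩ := hx
      exact Ordinal.mod_lt _ hΛ0
    · rw [Finset.card_image_of_injOn hinj, hQcard]
    · intro a' ha' b' hb' hab'
      simp only [Finset.mem_image] at ha' hb'
      obtain ⟨a, ha, rfl⟩ := ha'
      obtain ⟨b, hb, rfl⟩ := hb'
      have hne : a ≠ b := fun hh => absurd (hh ▸ rfl) hab'.ne
      rcases lt_or_gt_of_ne hne with hlt | hlt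
      · exact (hsameq a ha b hb hlt).2
      · -- `b < a` together with equal quotients contradicts `a % Λ < b % Λ`
        obtain ⟨hq, -⟩ := hsameq b hb a ha hlt
        exfalso
        have h1 : a < b := by
          calc a = Λ * (a / Λ) + a % Λ := (Ordinal.div_add_mod a Λ).symm
          _ < Λ * (a / Λ) + b % Λ := add_lt_add_right hab' _
          _ = Λ * (b / Λ) + b % Λ := by rw [hq]
          _ = b := Ordinal.div_add_mod b Λ
        exact absurd h1 (not_lt.2 hlt.le)
end
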